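/- There exist p > 0, ε₀ > 0, and a nonincreasing C¹ function h : (0,∞) → ℝ with h(2^{−β}) = 0 and h(τ)/τ → 0 as τ → ∞, such that for every ε ∈ (0, ε₀) the function w(t,x) = ε·(x·t^{−γ})^p·exp(h(t^β) − t^β·Φ(x·t^{−γ})) satisfies, for all t ≥ 1/2 and all x > 0 with x·t^{−γ} ≠ ȳ: 0 < w(t,x) ≤ 1, x + log(1/w(t,x)) > 0, and the subsolution inequality ∂_t w(t,x) ≤ ∂_xx w(t,x) − A·(x + log(1/w(t,x)))^{1−r}·w(t,x). -/

import Mathlib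

open Real Filter

/-- The subsolution ansatz w(t,x) = ε·(x·t^{−γ})^p·exp(h(t^β) − t^β·Φ(x·t^{−γ})). -/
noncomputable def wFun (Φ : ℝ → ℝ) (γ β p ε : ℝ) (h : ℝ → ℝ) (t x : ℝ) : ℝ :=
  ε * (x * t ^ (-γ)) ^ p * Real.exp (h (t ^ β) - t ^ β * Φ (x * t ^ (-γ)))

/-- Auxiliary logarithmic correction used in the subsolution construction. -/
noncomputable def hAux (K β : ℝ) : ℝ → ℝ := fun u => -K * (Real.log u + β * Real.log 2)

set_option maxHeartbeats 4000000 in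
/-- existence of a subsolution built from Φ in the moving frame,
for the case 1 < r < 3. -/
theorem stmt_19 (r A : ℝ) (hr1 : 1 < r) (hr3 : r < 3) (hA : 0 < A)
    (γ β : ℝ) (hγ : γ = 2 / (1 + r)) (hβ : β = (3 - r) / (1 + r))
    (Γ : ℝ → ℝ)
    (hΓ : ∀ y : ℝ, 0 < y → Γ y = γ ^ 2 * y ^ 2 / (4 * β) + A * y ^ (1 - r) / β)
    (ybar : ℝ) (hybar : ybar = (1 + r) ^ γ * A ^ (γ / 2))
    (Φ : ℝ → ℝ)
    (hΦcont : ContinuousOn Φ (Set.Ici 0))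
    (hΦreg : ContDiffOn ℝ 1 Φ (Set.Ioi 0))
    (hΦ'' : ∀ y > (0:ℝ), y ≠ ybar → DifferentiableAt ℝ (deriv Φ) y)
    (hΦode : ∀ y > (0:ℝ),
      (deriv Φ y) ^ 2 - γ * y * deriv Φ y = A * y ^ (1 - r) - β * Φ y)
    (C₁ : ℝ) (hC₁ : 0 < C₁)
    (hΦlb : ∀ y > (0:ℝ), min (1 / C₁) (y ^ 2 / 4) ≤ Φ y)
    (hΦ'ub1 : ∀ y ∈ Set.Ioc (0:ℝ) (1 / C₁),
      deriv Φ y ≤ -(1 / C₁) * y ^ (-((r - 1) / 2)))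
    (hΦ'ub2 : ∀ y ≥ 1 / C₁, deriv Φ y ≤ C₁ * y - 1 / C₁ * y ^ (-((r - 1) / 2)))
    (hΦ''bd : ∀ y > (0:ℝ), y ≠ ybar →
      0 ≤ deriv (deriv Φ) y ∧ deriv (deriv Φ) y ≤ C₁ * (1 + y ^ (-((1 + r) / 2)))) :
    ∃ p > (0:ℝ), ∃ ε₀ > (0:ℝ), ∃ h : ℝ → ℝ,
      ContDiffOn ℝ 1 h (Set.Ioi 0) ∧
      AntitoneOn h (Set.Ioi 0) ∧
      h ((2:ℝ) ^ (-β)) = 0 ∧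
      Tendsto (fun τ => h τ / τ) atTop (nhds 0) ∧
      ∀ ε : ℝ, 0 < ε → ε < ε₀ → ∀ t ≥ (1/2 : ℝ), ∀ x > (0:ℝ),
        x * t ^ (-γ) ≠ ybar →
        0 < wFun Φ γ β p ε h t x ∧
        wFun Φ γ β p ε h t x ≤ 1 ∧
        0 < x + Real.log (1 / wFun Φ γ β p ε h t x) ∧
        deriv (fun s => wFun Φ γ β p ε h s x) t ≤
          deriv (deriv (fun z => wFun Φ γ β p ε h t z)) x
            - A * (x + Real.log (1 / wFun Φ γ β p ε h t x)) ^ (1 - r)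
                * wFun Φ γ β p ε h t x := by
  -- basic positivity of the exponents
  have hr0 : (0:ℝ) < 1 + r := by linarith
  have hγ0 : 0 < γ := by rw [hγ]; positivity
  have hβ0 : 0 < β := by rw [hβ]; exact div_pos (by linarith) hr0
  have hβγ : β = 2 * γ - 1 := by rw [hβ, hγ]; field_simp; ring
  have hyb0 : 0 < ybar := by
    rw [hybar]
    exact mul_pos (Real.rpow_pos_of_pos hr0 _) (Real.rpow_pos_of_pos hA _)
  -- basic facts about Φ
  have hΦpos : ∀ u : ℝ, 0 < u → 0 < Φ u := fun u hu =>
    lt_of_lt_of_le (lt_min (by positivity) (by positivity)) (hΦlb u hu)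
  have hΦdiff : ∀ u : ℝ, 0 < u → DifferentiableAt ℝ Φ u := fun u hu =>
    (hΦreg.differentiableOn one_ne_zero).differentiableAt (Ioi_mem_nhds hu)
  have hΦ'cont : ContinuousOn (deriv Φ) (Set.Ioi 0) :=
    hΦreg.continuousOn_deriv_of_isOpen isOpen_Ioi le_rfl
  -- monotonicity of deriv Φ (convexity)
  have H : ∀ a b : ℝ, 0 < a → a ≤ b → ybar ∉ Set.Ioo a b → deriv Φ a ≤ deriv Φ b := by
    intro a b ha hab hno
    have hsub : Set.Icc a b ⊆ Set.Ioi 0 := fun z hz => lt_of_lt_of_le ha hz.1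
    have hmono := monotoneOn_of_deriv_nonneg (convex_Icc a b) (hΦ'cont.mono hsub)
      (by
        rw [interior_Icc]
        intro z hz
        exact (hΦ'' z (lt_trans ha hz.1) (fun h => hno (h ▸ hz))).differentiableWithinAt)
      (by
        rw [interior_Icc]
        intro z hz
        exact (hΦ''bd z (lt_trans ha hz.1) (fun h => hno (h ▸ hz))).1)
    exact hmono (Set.left_mem_Icc.2 hab) (Set.right_mem_Icc.2 hab) hab
  have hΦ'mono : ∀ a b : ℝ, 0 < a → a ≤ b → deriv Φ a ≤ deriv Φ b := by
    intro a b ha hab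
    rcases le_total b ybar with h1 | h1
    · exact H a b ha hab (fun hm => absurd hm.2 (not_lt.2 h1))
    rcases le_total ybar a with h2 | h2
    · exact H a b ha hab (fun hm => absurd hm.1 (not_lt.2 h2))
    · exact le_trans (H a ybar ha h2 (fun hm => lt_irrefl _ hm.2))
        (H ybar b hyb0 h1 (fun hm => lt_irrefl _ hm.1))
  -- a point where `deriv Φ` is positive, and linear growth of Φ
  have hr1' : (0:ℝ) < r - 1 := by linarith
  set c : ℝ := min (1/C₁) (1/4) with hc_def
  have hc0 : 0 < c := lt_min (by positivity) (by norm_num)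
  set Z : ℝ := (2*A/(β*c)) ^ (1/(r-1)) with hZ_def
  have hZbase : (0:ℝ) < 2*A/(β*c) := by positivity
  have hZ0 : 0 < Z := Real.rpow_pos_of_pos hZbase _
  set y₁ : ℝ := max 1 Z with hy₁_def
  have hy₁1 : (1:ℝ) ≤ y₁ := le_max_left _ _
  have hy₁0 : 0 < y₁ := by linarith
  have hy₁lb : A * y₁ ^ (1-r) ≤ β*c/2 := by
    have h1 : Z ≤ y₁ := le_max_right _ _
    have h2 : Z ^ (r-1) ≤ y₁ ^ (r-1) := Real.rpow_le_rpow hZ0.le h1 (by linarith)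
    have h3 : Z ^ (r-1) = 2*A/(β*c) := by
      rw [hZ_def, ← Real.rpow_mul hZbase.le, one_div,
        inv_mul_cancel₀ (ne_of_gt hr1'), Real.rpow_one]
    have h4 : y₁ ^ (1-r) = (y₁ ^ (r-1))⁻¹ := by
      rw [show (1-r) = -(r-1) by ring, Real.rpow_neg hy₁0.le]
    have h6 : y₁ ^ (1-r) ≤ (β*c)/(2*A) := by
      rw [h4]
      calc (y₁ ^ (r-1))⁻¹ ≤ (2*A/(β*c))⁻¹ := by
            apply inv_anti₀ hZbase
            rw [← h3]; exact h2
        _ = β*c/(2*A) := by rw [inv_div]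
    calc A * y₁ ^ (1-r) ≤ A * (β*c/(2*A)) := mul_le_mul_of_nonneg_left h6 hA.le
      _ = β*c/2 := by field_simp
  have hΦy₁c : c ≤ Φ y₁ :=
    le_trans (min_le_min le_rfl (by nlinarith : (1:ℝ)/4 ≤ y₁^2/4)) (hΦlb y₁ hy₁0)
  have hδ0 : 0 < deriv Φ y₁ := by
    by_contra hcon
    push_neg at hcon
    have hode := hΦode y₁ hy₁0
    nlinarith [sq_nonneg (deriv Φ y₁),
      mul_nonneg (mul_pos hγ0 hy₁0).le (neg_nonneg.2 hcon),
      mul_le_mul_of_nonneg_left hΦy₁c hβ0.le, mul_pos hβ0 hc0, hy₁lb]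
  set δ : ℝ := deriv Φ y₁ with hδ_def
  have hgrow : ∀ u : ℝ, y₁ ≤ u → δ * (u - y₁) ≤ Φ u := by
    intro u hu
    rcases eq_or_lt_of_le hu with heq | hlt
    · rw [← heq]
      simpa using (hΦpos y₁ hy₁0).le
    · obtain ⟨ξ, hξ, hsl⟩ := exists_deriv_eq_slope Φ hlt
        (hΦcont.mono (fun z hz => le_trans hy₁0.le hz.1))
        (fun z hz => (hΦdiff z (lt_trans hy₁0 hz.1)).differentiableWithinAt)
      have h1 : δ ≤ deriv Φ ξ := hΦ'mono y₁ ξ hy₁0 hξ.1.le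
      rw [hsl, le_div_iff₀ (by linarith : (0:ℝ) < u - y₁)] at h1
      nlinarith [hΦpos y₁ hy₁0]
  -- choice of the exponent p
  obtain ⟨n, hp1', hp2'⟩ : ∃ n : ℕ, 1 ≤ (n:ℝ) ∧ C₁^2 ≤ 2*(n:ℝ) := by
    refine ⟨⌈C₁^2/2⌉₊ + 1, by exact_mod_cast Nat.succ_le_succ (Nat.zero_le _), ?_⟩
    have h1 := Nat.le_ceil (C₁^2/2)
    have h2 : ((⌈C₁^2/2⌉₊ : ℝ)) ≤ ((⌈C₁^2/2⌉₊ + 1 : ℕ):ℝ) := by exact_mod_cast Nat.le_succ _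
    linarith
  set p : ℝ := (n : ℝ) with hp_def
  have hp1 : (1:ℝ) ≤ p := hp1'
  have hp0 : (0:ℝ) < p := by linarith
  have hp2 : C₁^2 ≤ 2*p := hp2'
  -- the constant K and bound on the crucial combination
  set K : ℝ := (C₁ + 2*p*C₁)/β with hK_def
  have hK0 : 0 < K := by rw [hK_def]; positivity
  have hβK : β * K = C₁ + 2*p*C₁ := by rw [hK_def]; field_simp
  have hD : ∀ u : ℝ, 0 < u → u ≠ ybar →
      -(C₁ + 2*p*C₁) ≤ -(2*p) * deriv Φ u * u⁻¹ - deriv (deriv Φ) u := by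
    intro u hu hneu
    have hu' : (0:ℝ) < u⁻¹ := by positivity
    have he : u ^ (-((r-1)/2)) * u⁻¹ = u ^ (-((1+r)/2)) := by
      rw [← Real.rpow_neg_one u, ← Real.rpow_add hu]
      congr 1; ring
    have he0 : (0:ℝ) ≤ u ^ (-((1+r)/2)) := (Real.rpow_pos_of_pos hu _).le
    have hQbd := (hΦ''bd u hu hneu).2
    have hpc : 0 ≤ 2*p*C₁⁻¹ - C₁ := by
      have h : C₁ ≤ 2*p*C₁⁻¹ := by
        rw [← one_div, mul_one_div, le_div_iff₀ hC₁]; nlinarith [hp2]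
      linarith
    have hpcm : 0 ≤ (2*p*C₁⁻¹ - C₁) * u ^ (-((1+r)/2)) := mul_nonneg hpc he0
    have h4 : (0:ℝ) ≤ 2*p*C₁ := by positivity
    rcases le_or_gt u (1/C₁) with hcase | hcase
    · have hP := hΦ'ub1 u ⟨hu, hcase⟩
      have hP' : deriv Φ u * u⁻¹ ≤ -(C₁⁻¹ * u ^ (-((1+r)/2))) := by
        calc deriv Φ u * u⁻¹ ≤ (-(1/C₁) * u ^ (-((r-1)/2))) * u⁻¹ :=
              mul_le_mul_of_nonneg_right hP hu'.le
          _ = -(C₁⁻¹ * (u ^ (-((r-1)/2)) * u⁻¹)) := by rw [one_div]; ring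
          _ = -(C₁⁻¹ * u ^ (-((1+r)/2))) := by rw [he]
      have hmul := mul_le_mul_of_nonneg_left hP' (by positivity : (0:ℝ) ≤ 2*p)
      nlinarith [hmul, hQbd, hpcm, h4]
    · have hP := hΦ'ub2 u hcase.le
      have hP' : deriv Φ u * u⁻¹ ≤ C₁ - C₁⁻¹ * u ^ (-((1+r)/2)) := by
        calc deriv Φ u * u⁻¹ ≤ (C₁ * u - 1/C₁ * u ^ (-((r-1)/2))) * u⁻¹ :=
              mul_le_mul_of_nonneg_right hP hu'.le
          _ = C₁ * (u * u⁻¹) - C₁⁻¹ * (u ^ (-((r-1)/2)) * u⁻¹) := by rw [one_div]; ring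
          _ = C₁ - C₁⁻¹ * u ^ (-((1+r)/2)) := by
              rw [mul_inv_cancel₀ (ne_of_gt hu), he, mul_one]
      have hmul := mul_le_mul_of_nonneg_left hP' (by positivity : (0:ℝ) ≤ 2*p)
      nlinarith [hmul, hQbd, hpcm, h4]
  -- the constant B bounding y^p e^{-τ Φ(y)}
  have hτ₀0 : (0:ℝ) < (2:ℝ) ^ (-β) := Real.rpow_pos_of_pos two_pos _
  set cq : ℝ := (2:ℝ) ^ (-β) * δ with hcq_def
  have hcq0 : 0 < cq := mul_pos hτ₀0 hδ0
  set B : ℝ := max (y₁ ^ n) (Real.exp (cq*y₁) * (n.factorial : ℝ) / cq ^ n) with hB_def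
  have hB0 : 0 < B := lt_of_lt_of_le (pow_pos hy₁0 n) (le_max_left _ _)
  have hBnd : ∀ u : ℝ, 0 < u → ∀ T' : ℝ, (2:ℝ) ^ (-β) ≤ T' →
      u ^ p * Real.exp (-(T' * Φ u)) ≤ B := by
    intro u hu T' hT'
    have hT'0 : (0:ℝ) < T' := lt_of_lt_of_le hτ₀0 hT'
    rcases le_total u y₁ with hle | hle
    · have h1 : u ^ p ≤ y₁ ^ p := Real.rpow_le_rpow hu.le hle (by positivity)
      have h2 : Real.exp (-(T' * Φ u)) ≤ 1 := by
        rw [Real.exp_le_one_iff]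
        nlinarith [hΦpos u hu]
      calc u ^ p * Real.exp (-(T' * Φ u)) ≤ y₁ ^ p * 1 :=
            mul_le_mul h1 h2 (Real.exp_pos _).le (Real.rpow_nonneg hy₁0.le p)
        _ = y₁ ^ n := by rw [mul_one, hp_def, Real.rpow_natCast]
        _ ≤ B := le_max_left _ _
    · have hgrw := hgrow u hle
      have h1 : cq * (u - y₁) ≤ T' * Φ u := by
        calc cq * (u - y₁) = (2:ℝ) ^ (-β) * (δ * (u - y₁)) := by rw [hcq_def]; ring
          _ ≤ T' * Φ u :=
              mul_le_mul hT' hgrw (by nlinarith) hT'0.le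
      have h2 : Real.exp (-(T' * Φ u)) ≤ Real.exp (-(cq * (u - y₁))) :=
        Real.exp_le_exp.2 (by linarith)
      have h3 : (cq*u) ^ n ≤ (n.factorial : ℝ) * Real.exp (cq*u) := by
        have h0 : (0:ℝ) ≤ cq * u := by positivity
        have h4 := Real.sum_le_exp_of_nonneg h0 (n+1)
        have h5 : (cq*u) ^ n / (n.factorial : ℝ) ≤
            ∑ i ∈ Finset.range (n+1), (cq*u) ^ i / (i.factorial : ℝ) :=
          Finset.single_le_sum (f := fun i => (cq*u) ^ i / (i.factorial : ℝ))
            (fun i _ => by positivity) (Finset.self_mem_range_succ n)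
        have h6 : (0:ℝ) < (n.factorial : ℝ) := by exact_mod_cast n.factorial_pos
        rw [div_le_iff₀ h6] at h5
        calc (cq*u) ^ n ≤ (∑ i ∈ Finset.range (n+1), (cq*u) ^ i / (i.factorial : ℝ)) *
              (n.factorial : ℝ) := h5
          _ ≤ Real.exp (cq*u) * (n.factorial : ℝ) :=
              mul_le_mul_of_nonneg_right h4 h6.le
          _ = (n.factorial : ℝ) * Real.exp (cq*u) := by ring
      have h8 : u ^ n ≤ (n.factorial : ℝ) / cq ^ n * Real.exp (cq*u) := by
        rw [div_mul_eq_mul_div, le_div_iff₀ (by positivity : (0:ℝ) < cq ^ n)]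
        calc u ^ n * cq ^ n = (cq*u) ^ n := by rw [mul_pow]; ring
          _ ≤ _ := h3
      calc u ^ p * Real.exp (-(T' * Φ u)) ≤ u ^ n * Real.exp (-(cq * (u - y₁))) := by
            rw [hp_def, Real.rpow_natCast]
            exact mul_le_mul_of_nonneg_left h2 (by positivity)
        _ ≤ ((n.factorial : ℝ) / cq ^ n * Real.exp (cq*u)) * Real.exp (-(cq * (u - y₁))) :=
            mul_le_mul_of_nonneg_right h8 (Real.exp_pos _).le
        _ = Real.exp (cq*y₁) * (n.factorial : ℝ) / cq ^ n := by
            rw [mul_assoc, ← Real.exp_add, show cq*u + -(cq*(u - y₁)) = cq*y₁ by ring]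
            ring
        _ ≤ B := le_max_right _ _
  clear_value B cq δ y₁ Z c p K
  clear hp_def hB_def hcq_def hc_def hZ_def hy₁_def hδ_def hK_def
  -- the choice of ε₀ and of h
  refine ⟨p, hp0, B⁻¹, by positivity, hAux K β, ?_, ?_, ?_, ?_, ?_⟩
  · -- ContDiffOn
    apply ContDiffOn.mul contDiffOn_const
    exact ((Real.contDiffOn_log.mono
      (fun z (hz : z ∈ Set.Ioi (0:ℝ)) => ne_of_gt hz)).of_le le_top).add contDiffOn_const
  · -- AntitoneOn
    intro a ha b hb hab
    simp only [hAux]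
    have h1 := Real.log_le_log ha hab
    nlinarith [mul_le_mul_of_nonneg_left h1 hK0.le]
  · -- value at 2^{-β}
    simp only [hAux]
    rw [Real.log_rpow two_pos]
    ring
  · -- Tendsto
    have h1 : Tendsto (fun u : ℝ => Real.log u / u) atTop (nhds 0) := by
      simpa using Real.isLittleO_log_id_atTop.tendsto_div_nhds_zero
    have h2 : Tendsto (fun u : ℝ => u⁻¹) atTop (nhds (0:ℝ)) := tendsto_inv_atTop_zero
    have h3 := (h1.const_mul (-K)).add (h2.const_mul (-K*(β*Real.log 2)))
    simp only [mul_zero, add_zero] at h3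
    refine h3.congr (fun u => ?_)
    simp only [hAux]
    ring
  -- the main estimate
  intro ε hε0 hεB t ht x hx hneq
  have ht0 : (0:ℝ) < t := by linarith
  have hT0 : (0:ℝ) < t ^ (-γ) := Real.rpow_pos_of_pos ht0 _
  have hτ0 : (0:ℝ) < t ^ β := Real.rpow_pos_of_pos ht0 _
  have hy0 : (0:ℝ) < x * t ^ (-γ) := mul_pos hx hT0
  simp only [wFun, hAux]
  set T : ℝ := t ^ (-γ) with hT_def
  set τ : ℝ := t ^ β with hτ_def
  set y : ℝ := x * T with hy_def
  set E : ℝ := Real.exp (-K * (Real.log τ + β * Real.log 2) - τ * Φ y) with hE_def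
  set w : ℝ := ε * y ^ p * E with hw_def
  set P : ℝ := deriv Φ y with hP_def
  set Q : ℝ := deriv (deriv Φ) y with hQ_def
  -- τ is at least 2^{-β}
  have hττ₀ : (2:ℝ) ^ (-β) ≤ τ := by
    have h1 : ((1/2:ℝ)) ^ β = (2:ℝ) ^ (-β) := by
      rw [one_div, Real.inv_rpow (by norm_num : (0:ℝ) ≤ 2), ← Real.rpow_neg (by norm_num)]
    rw [hτ_def, ← h1]
    exact Real.rpow_le_rpow (by norm_num) ht hβ0.le
  -- positivity of w
  have hw0 : 0 < w := by
    rw [hw_def, hE_def]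
    exact mul_pos (mul_pos hε0 (Real.rpow_pos_of_pos hy0 p)) (Real.exp_pos _)
  -- w ≤ 1
  have hh0 : -K * (Real.log τ + β * Real.log 2) ≤ 0 := by
    have hlog : Real.log ((2:ℝ) ^ (-β)) ≤ Real.log τ := Real.log_le_log hτ₀0 hττ₀
    rw [Real.log_rpow two_pos] at hlog
    have h2 : 0 ≤ K * (Real.log τ + β * Real.log 2) :=
      mul_nonneg hK0.le (by linarith)
    linarith
  have hw1 : w ≤ 1 := by
    have h1 : E ≤ Real.exp (-(τ * Φ y)) := by
      rw [hE_def]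
      exact Real.exp_le_exp.2 (by linarith)
    calc w = ε * (y ^ p * E) := by rw [hw_def]; ring
      _ ≤ ε * (y ^ p * Real.exp (-(τ * Φ y))) :=
          mul_le_mul_of_nonneg_left
            (mul_le_mul_of_nonneg_left h1 (Real.rpow_nonneg hy0.le p)) hε0.le
      _ ≤ ε * B := mul_le_mul_of_nonneg_left (hBnd y hy0 τ hττ₀) hε0.le
      _ ≤ B⁻¹ * B := mul_le_mul_of_nonneg_right hεB.le hB0.le
      _ = 1 := inv_mul_cancel₀ hB0.ne'
  have hL0 : 0 ≤ Real.log (1 / w) := by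
    apply Real.log_nonneg
    rw [le_div_iff₀ hw0]; linarith
  refine ⟨hw0, hw1, by linarith, ?_⟩
  -- basic rpow identities
  have hty : t ^ (-γ - 1) = T * t⁻¹ := by
    rw [hT_def, show -γ - 1 = -γ + (-1) by ring, Real.rpow_add ht0, Real.rpow_neg_one]
  have htβ : t ^ (β - 1) = τ * t⁻¹ := by
    rw [hτ_def, show β - 1 = β + (-1) by ring, Real.rpow_add ht0, Real.rpow_neg_one]
  have hyp1f : y ^ (p - 1) = y ^ p * y⁻¹ := by
    rw [show p - 1 = p + (-1) by ring, Real.rpow_add hy0, Real.rpow_neg_one]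
  have hyp2f : y ^ (p - 1 - 1) = y ^ p * y⁻¹ * y⁻¹ := by
    rw [show p - 1 - 1 = p + (-1) + (-1) by ring, Real.rpow_add hy0,
      Real.rpow_add hy0, Real.rpow_neg_one]
  -- time derivative
  have hs1 : HasDerivAt (fun s : ℝ => s ^ (-γ)) (-γ * t ^ (-γ - 1)) t :=
    Real.hasDerivAt_rpow_const (Or.inl ht0.ne')
  have hs2 : HasDerivAt (fun s : ℝ => x * s ^ (-γ)) (x * (-γ * t ^ (-γ - 1))) t :=
    hs1.const_mul x
  have hs3 : HasDerivAt (fun s : ℝ => (x * s ^ (-γ)) ^ p)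
      (x * (-γ * t ^ (-γ - 1)) * p * y ^ (p - 1)) t :=
    hs2.rpow_const (Or.inl hy0.ne')
  have hs4 : HasDerivAt (fun s : ℝ => s ^ β) (β * t ^ (β - 1)) t :=
    Real.hasDerivAt_rpow_const (Or.inl ht0.ne')
  have hs5 : HasDerivAt Real.log τ⁻¹ τ := Real.hasDerivAt_log hτ0.ne'
  have hs6 : HasDerivAt (fun s : ℝ => Real.log (s ^ β)) (τ⁻¹ * (β * t ^ (β - 1))) t :=
    by have := HasDerivAt.comp t hs5 hs4; exact this
  have hs8 : HasDerivAt (fun s : ℝ => -K * (Real.log (s ^ β) + β * Real.log 2))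
      (-K * (τ⁻¹ * (β * t ^ (β - 1)))) t := (hs6.add_const _).const_mul (-K)
  have hs9 : HasDerivAt Φ P y := (hΦdiff y hy0).hasDerivAt
  have hs10 : HasDerivAt (fun s : ℝ => Φ (x * s ^ (-γ)))
      (P * (x * (-γ * t ^ (-γ - 1)))) t := HasDerivAt.comp t hs9 hs2
  have hs11 : HasDerivAt (fun s : ℝ => s ^ β * Φ (x * s ^ (-γ)))
      (β * t ^ (β - 1) * Φ y + τ * (P * (x * (-γ * t ^ (-γ - 1))))) t := hs4.mul hs10
  have hs13 : HasDerivAt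
      (fun s : ℝ => Real.exp (-K * (Real.log (s ^ β) + β * Real.log 2)
        - s ^ β * Φ (x * s ^ (-γ))))
      (E * (-K * (τ⁻¹ * (β * t ^ (β - 1)))
        - (β * t ^ (β - 1) * Φ y + τ * (P * (x * (-γ * t ^ (-γ - 1))))))) t :=
    (hs8.sub hs11).exp
  have hsW : HasDerivAt
      (fun s : ℝ => ε * (x * s ^ (-γ)) ^ p *
        Real.exp (-K * (Real.log (s ^ β) + β * Real.log 2) - s ^ β * Φ (x * s ^ (-γ))))
      (ε * (x * (-γ * t ^ (-γ - 1)) * p * y ^ (p - 1)) * E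
        + ε * y ^ p * (E * (-K * (τ⁻¹ * (β * t ^ (β - 1)))
          - (β * t ^ (β - 1) * Φ y + τ * (P * (x * (-γ * t ^ (-γ - 1)))))))) t :=
    (hs3.const_mul ε).mul hs13
  have hdt : deriv (fun s : ℝ => ε * (x * s ^ (-γ)) ^ p *
      Real.exp (-K * (Real.log (s ^ β) + β * Real.log 2) - s ^ β * Φ (x * s ^ (-γ)))) t
      = w * ((-(p*γ) - β*K - β*τ*Φ y + γ*τ*y*P) * t⁻¹) := by
    rw [hsW.deriv, hty, htβ, hyp1f, hw_def, hy_def]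
    have hτne : τ ≠ 0 := hτ0.ne'
    have htne : t ≠ 0 := ht0.ne'
    have hxTne : x * T ≠ 0 := by rw [hy_def] at hy0; exact hy0.ne'
    field_simp
    ring
  -- first space derivative on a neighborhood
  have hGall : ∀ z ∈ Set.Ioi (0:ℝ),
      deriv (fun z' : ℝ => ε * (z' * T) ^ p *
        Real.exp (-K * (Real.log τ + β * Real.log 2) - τ * Φ (z' * T))) z
      = (ε * T) * (Real.exp (-K * (Real.log τ + β * Real.log 2) - τ * Φ (z * T)) *
          ((z * T) ^ (p - 1) * (p - τ * (z * T) * deriv Φ (z * T)))) := by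
    intro z hz
    have hz0 : (0:ℝ) < z := hz
    have hu0 : (0:ℝ) < z * T := mul_pos hz0 hT0
    have k1 : HasDerivAt (fun z' : ℝ => z' * T) T z := hasDerivAt_mul_const T
    have k2 : HasDerivAt (fun z' : ℝ => (z' * T) ^ p) (T * p * (z * T) ^ (p - 1)) z :=
      k1.rpow_const (Or.inl hu0.ne')
    have k3 : HasDerivAt (fun z' : ℝ => Φ (z' * T)) (deriv Φ (z * T) * T) z :=
      HasDerivAt.comp z (hΦdiff _ hu0).hasDerivAt k1
    have k4 : HasDerivAt
        (fun z' : ℝ => -K * (Real.log τ + β * Real.log 2) - τ * Φ (z' * T))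
        (-(τ * (deriv Φ (z * T) * T))) z := (k3.const_mul τ).const_sub _
    have k6 := (k2.const_mul ε).mul k4.exp
    rw [show deriv (fun z' : ℝ => ε * (z' * T) ^ p *
      Real.exp (-K * (Real.log τ + β * Real.log 2) - τ * Φ (z' * T))) z = _ from k6.deriv]
    have hupp : (z * T) ^ p = (z * T) ^ (p - 1) * (z * T) := by
      rw [← Real.rpow_add_one hu0.ne' (p - 1), sub_add_cancel]
    rw [hupp]
    ring
  have hdd : deriv (deriv (fun z : ℝ => ε * (z * T) ^ p *
      Real.exp (-K * (Real.log τ + β * Real.log 2) - τ * Φ (z * T)))) x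
      = deriv (fun z : ℝ => (ε * T) *
          (Real.exp (-K * (Real.log τ + β * Real.log 2) - τ * Φ (z * T)) *
            ((z * T) ^ (p - 1) * (p - τ * (z * T) * deriv Φ (z * T))))) x := by
    apply Filter.EventuallyEq.deriv_eq
    filter_upwards [Ioi_mem_nhds hx] with z hz
    exact hGall z hz
  -- second space derivative
  have m1 : HasDerivAt (fun z : ℝ => z * T) T x := hasDerivAt_mul_const T
  have m2 : HasDerivAt (fun z : ℝ => Φ (z * T)) (P * T) x :=
    HasDerivAt.comp x (hΦdiff y hy0).hasDerivAt m1
  have m3 : HasDerivAt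
      (fun z : ℝ => -K * (Real.log τ + β * Real.log 2) - τ * Φ (z * T))
      (-(τ * (P * T))) x := (m2.const_mul τ).const_sub _
  have m4 : HasDerivAt
      (fun z : ℝ => Real.exp (-K * (Real.log τ + β * Real.log 2) - τ * Φ (z * T)))
      (E * (-(τ * (P * T)))) x := m3.exp
  have m5 : HasDerivAt (fun z : ℝ => (z * T) ^ (p - 1))
      (T * (p - 1) * y ^ (p - 1 - 1)) x := m1.rpow_const (Or.inl hy0.ne')
  have m7 : HasDerivAt (fun z : ℝ => deriv Φ (z * T)) (Q * T) x :=
    by have := HasDerivAt.comp x (hΦ'' y hy0 hneq).hasDerivAt m1; exact this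
  have m9 : HasDerivAt (fun z : ℝ => τ * (z * T) * deriv Φ (z * T))
      (τ * T * P + τ * y * (Q * T)) x := (m1.const_mul τ).mul m7
  have m10 : HasDerivAt (fun z : ℝ => p - τ * (z * T) * deriv Φ (z * T))
      (-(τ * T * P + τ * y * (Q * T))) x := m9.const_sub p
  have m13 : HasDerivAt (fun z : ℝ => (ε * T) *
      (Real.exp (-K * (Real.log τ + β * Real.log 2) - τ * Φ (z * T)) *
        ((z * T) ^ (p - 1) * (p - τ * (z * T) * deriv Φ (z * T)))))
      ((ε * T) * (E * (-(τ * (P * T))) * (y ^ (p - 1) * (p - τ * y * P))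
        + E * (T * (p - 1) * y ^ (p - 1 - 1) * (p - τ * y * P)
          + y ^ (p - 1) * (-(τ * T * P + τ * y * (Q * T)))))) x :=
    (m4.mul (m5.mul m10)).const_mul (ε * T)
  rw [hdt, hdd, m13.deriv]
  clear_value w P Q E y τ T
  -- the remaining algebraic inequality
  have hODE2 : P ^ 2 = γ * y * P + A * y ^ (1 - r) - β * Φ y := by
    rw [hP_def]; linarith [hΦode y hy0]
  have hTτ : T * T * τ = t⁻¹ := by
    rw [hT_def, hτ_def, ← Real.rpow_add ht0, ← Real.rpow_add ht0,
      show -γ + -γ + β = -1 by rw [hβγ]; ring, Real.rpow_neg_one]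
  have hAy : T * T * (τ * τ) * y ^ (1 - r) = x ^ (1 - r) := by
    rw [hy_def, Real.mul_rpow hx.le hT0.le, hT_def, hτ_def,
      ← Real.rpow_mul ht0.le]
    have h2 : t ^ (-γ) * t ^ (-γ) * (t ^ β * t ^ β) * t ^ (-γ * (1 - r)) = 1 := by
      rw [show t ^ (-γ) * t ^ (-γ) * (t ^ β * t ^ β) * t ^ (-γ * (1 - r))
          = t ^ (-γ) * (t ^ (-γ) * (t ^ β * (t ^ β * t ^ (-γ * (1 - r))))) by ring,
        ← Real.rpow_add ht0, ← Real.rpow_add ht0, ← Real.rpow_add ht0,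
        ← Real.rpow_add ht0,
        show -γ + (-γ + (β + (β + -γ * (1 - r)))) = 0 by
          rw [hβ, hγ]; field_simp; ring,
        Real.rpow_zero]
    linear_combination x ^ (1 - r) * h2
  have hDy := hD y hy0 hneq
  rw [← hP_def, ← hQ_def] at hDy
  have hx1r : A * (x + Real.log (1 / w)) ^ (1 - r) ≤ A * x ^ (1 - r) := by
    have h1 : (x + Real.log (1 / w)) ^ (1 - r) ≤ x ^ (1 - r) :=
      Real.rpow_le_rpow_of_nonpos hx (by linarith) (by linarith)
    exact mul_le_mul_of_nonneg_left h1 hA.le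
  have hE0 : 0 < E := by rw [hE_def]; exact Real.exp_pos _
  have hA1 : y ^ (p - 1) = y ^ (p - 1 - 1) * y := by
    rw [← Real.rpow_add_one hy0.ne' (p - 1 - 1), sub_add_cancel]
  have hA2 : y ^ p = y ^ (p - 1) * y := by
    rw [← Real.rpow_add_one hy0.ne' (p - 1), sub_add_cancel]
  have hyy : y * y⁻¹ = 1 := mul_inv_cancel₀ hy0.ne'
  have key : (ε * T) * (E * (-(τ * (P * T))) * (y ^ (p - 1) * (p - τ * y * P))
        + E * (T * (p - 1) * y ^ (p - 1 - 1) * (p - τ * y * P)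
          + y ^ (p - 1) * (-(τ * T * P + τ * y * (Q * T)))))
      - A * (x + Real.log (1 / w)) ^ (1 - r) * w
      - w * ((-(p*γ) - β*K - β*τ*Φ y + γ*τ*y*P) * t⁻¹)
      = (ε * y ^ (p - 1 - 1) * E) *
        (T * T * (p * (p - 1) - 2*p*τ*P*y - τ*Q*y^2 + τ*τ*P^2*y^2)
          + (p*γ + β*K + β*τ*Φ y - γ*τ*y*P) * y^2 * t⁻¹
          - A * (x + Real.log (1 / w)) ^ (1 - r) * y^2) := by
    rw [hw_def, hA2, hA1]
    ring
  have e1 : T * T * (p * (p - 1) - 2*p*τ*P*y - τ*Q*y^2 + τ*τ*P^2*y^2)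
        + (p*γ + β*K + β*τ*Φ y - γ*τ*y*P) * y^2 * t⁻¹
        - A * (x + Real.log (1 / w)) ^ (1 - r) * y^2
      = T * T * (p * (p - 1))
        + ((-(2*p))*P*y⁻¹ - Q + (p*γ + β*K)) * (y^2 * t⁻¹)
        + (A * x ^ (1 - r) - A * (x + Real.log (1 / w)) ^ (1 - r)) * y^2 := by
    linear_combination (T * T * (τ * τ) * y^2) * hODE2
      + (-(2*p)*P*y - Q*y^2 + (γ*y*P - β*Φ y)*τ*y^2) * hTτ
      + (A * y^2) * hAy + (2*p*P*y*t⁻¹) * hyy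
  have ht1 : 0 ≤ T * T * (p * (p - 1)) := by
    have h1 : 0 ≤ p * (p - 1) := mul_nonneg hp0.le (by linarith)
    exact mul_nonneg (mul_nonneg hT0.le hT0.le) h1
  have ht2 : 0 ≤ ((-(2*p))*P*y⁻¹ - Q + (p*γ + β*K)) * (y^2 * t⁻¹) := by
    apply mul_nonneg _ (mul_nonneg (sq_nonneg y) (inv_nonneg.2 ht0.le))
    have h1 : 0 ≤ p * γ := mul_nonneg hp0.le hγ0.le
    linarith [hDy, hβK]
  have ht3 : 0 ≤ (A * x ^ (1 - r) - A * (x + Real.log (1 / w)) ^ (1 - r)) * y^2 :=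
    mul_nonneg (by linarith [hx1r]) (sq_nonneg y)
  have hS1 : 0 ≤ T * T * (p * (p - 1) - 2*p*τ*P*y - τ*Q*y^2 + τ*τ*P^2*y^2)
        + (p*γ + β*K + β*τ*Φ y - γ*τ*y*P) * y^2 * t⁻¹
        - A * (x + Real.log (1 / w)) ^ (1 - r) * y^2 := by
    rw [e1]; exact add_nonneg (add_nonneg ht1 ht2) ht3
  have hfac : 0 ≤ ε * y ^ (p - 1 - 1) * E :=
    mul_nonneg (mul_nonneg hε0.le (Real.rpow_nonneg hy0.le _)) hE0.le
  linarith [key, mul_nonneg hfac hS1]
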